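/- For every n ∈ ℕ with n ≥ 2, Π_{1 ≤ k ≤ n−1, k regular (mod n)} sin(kπ/n) = κ(n) / 2^{ρ(n)−1}, where κ(n) = Π_{p | n} p is the largest squarefree divisor of n. -/

import Mathlib

open Finset Real
open scoped Classical

/-- `k` is regular (mod `n`): there is an integer `x` with `k² x ≡ k (mod n)`. -/
def IsRegularMod (k n : ℕ) : Prop := ∃ x : ℤ, (n : ℤ) ∣ (k : ℤ) ^ 2 * x - (k : ℤ)

/-- `Reg_n`, the set of `k ∈ {1,…,n}` that are regular (mod `n`). -/
noncomputable def Reg (n : ℕ) : Finset ℕ :=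
  (Finset.Icc 1 n).filter fun k => IsRegularMod k n

/-- `κ(n) = ∏_{p ∣ n} p`, the largest squarefree divisor of `n`. -/
def kappa (n : ℕ) : ℕ := ∏ p ∈ n.primeFactors, p

/-- regularity iff gcd is a unitary divisor -/
lemma isRegularMod_iff {n : ℕ} (hn : 0 < n) (k : ℕ) :
    IsRegularMod k n ↔ Nat.Coprime (Nat.gcd k n) (n / Nat.gcd k n) := by
  set d := Nat.gcd k n with hd
  have hdk : d ∣ k := Nat.gcd_dvd_left k n
  have hdn : d ∣ n := Nat.gcd_dvd_right k n
  have hdpos : 0 < d := Nat.gcd_pos_of_pos_right _ hn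
  constructor
  · rintro ⟨x, hx⟩
    rw [Nat.coprime_iff_gcd_eq_one]
    by_contra hne
    obtain ⟨p, hp, hpdvd⟩ := Nat.exists_prime_and_dvd hne
    have hpd : p ∣ d := hpdvd.trans (Nat.gcd_dvd_left _ _)
    have hpN : p ∣ n / d := hpdvd.trans (Nat.gcd_dvd_right _ _)
    have hpk : p ∣ k := hpd.trans hdk
    set e := n.factorization p with he
    -- p^e ∣ k over ℤ
    have hpen : (p : ℕ) ^ e ∣ n := Nat.ordProj_dvd n p
    have hfac : ((k : ℤ) ^ 2 * x - k) = k * (k * x - 1) := by ring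
    have hdvd : ((p : ℤ)) ^ e ∣ (k : ℤ) * (k * x - 1) := by
      rw [← hfac]
      exact dvd_trans (by exact_mod_cast Int.natCast_dvd_natCast.mpr hpen) hx
    have hnotdvd : ¬ ((p : ℤ) ∣ (k * x - 1)) := by
      intro h
      have h1 : (p : ℤ) ∣ (k : ℤ) * x := Dvd.dvd.mul_right (by exact_mod_cast hpk) x
      have : (p : ℤ) ∣ 1 := by
        have := dvd_sub h1 h
        simpa using this
      have := Int.le_of_dvd one_pos this
      have hp2 := hp.two_le
      omega
    have hcop : IsCoprime ((p : ℤ)) ((k : ℤ) * x - 1) := by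
      rw [Int.isCoprime_iff_gcd_eq_one]
      rcases (Nat.coprime_or_dvd_of_prime hp ((k : ℤ) * x - 1).natAbs) with h | h
      · simpa [Int.gcd] using h
      · exact absurd (Int.dvd_natAbs.mp (Int.natCast_dvd_natCast.mpr h)) hnotdvd
    have hcope : IsCoprime ((p : ℤ) ^ e) ((k : ℤ) * x - 1) := hcop.pow_left
    have hpek : ((p : ℤ)) ^ e ∣ (k : ℤ) := hcope.dvd_of_dvd_mul_right hdvd
    have hpekn : (p : ℕ) ^ e ∣ k := by exact_mod_cast hpek
    have hped : (p : ℕ) ^ e ∣ d := Nat.dvd_gcd hpekn hpen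
    -- then p^(e+1) ∣ n
    have : (p : ℕ) ^ (e + 1) ∣ n := by
      have hmul : d * (n / d) = n := Nat.mul_div_cancel' hdn
      have : p ^ e * p ∣ d * (n / d) := mul_dvd_mul hped hpN
      rwa [← pow_succ, hmul] at this
    exact Nat.pow_succ_factorization_not_dvd hn.ne' hp this
  · intro hcop
    -- k = d * m with m coprime to N := n/d, and d coprime N, so k coprime N
    set N := n / d with hN
    have hkN : Nat.Coprime k N := by
      have hm : Nat.Coprime (k / d) N := Nat.coprime_div_gcd_div_gcd hdpos
      have : k = d * (k / d) := (Nat.mul_div_cancel' hdk).symm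
      rw [this]
      exact Nat.Coprime.mul hcop hm
    have : IsCoprime (k : ℤ) (N : ℤ) := by
      rw [Int.isCoprime_iff_gcd_eq_one]
      simpa [Int.gcd] using hkN
    obtain ⟨a, b, hab⟩ := this
    refine ⟨a, ?_⟩
    have hNdvd : (N : ℤ) ∣ (k : ℤ) * a - 1 := ⟨-b, by linear_combination hab⟩
    have hmul : (d : ℤ) * N = n := by
      exact_mod_cast congrArg (Nat.cast : ℕ → ℤ) (Nat.mul_div_cancel' hdn)
    have : (k : ℤ) ^ 2 * a - k = k * ((k : ℤ) * a - 1) := by ring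
    rw [this, ← hmul]
    exact mul_dvd_mul (by exact_mod_cast hdk) hNdvd

lemma n_regular (n : ℕ) : IsRegularMod n n := ⟨0, ⟨-1, by ring⟩⟩

lemma abs_one_sub_exp (x : ℝ) (h0 : 0 ≤ x) (h1 : x ≤ Real.pi) :
    ‖1 - Complex.exp (2 * x * Complex.I)‖ = 2 * Real.sin x := by
  have hsin : 0 ≤ Real.sin x := Real.sin_nonneg_of_nonneg_of_le_pi h0 h1
  have hre : (1 - Complex.exp (2 * x * Complex.I)).re = 1 - Real.cos (2 * x) := by
    have : (2 : ℂ) * x * Complex.I = ((2 * x : ℝ) : ℂ) * Complex.I := by push_cast; ring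
    simp [this, Complex.exp_ofReal_mul_I_re]
  have him : (1 - Complex.exp (2 * x * Complex.I)).im = - Real.sin (2 * x) := by
    have : (2 : ℂ) * x * Complex.I = ((2 * x : ℝ) : ℂ) * Complex.I := by push_cast; ring
    simp [this, Complex.exp_ofReal_mul_I_im]
  have hsq : (‖1 - Complex.exp (2 * x * Complex.I)‖) ^ 2 =
      (2 * Real.sin x) ^ 2 := by
    rw [Complex.sq_norm, Complex.normSq_apply, hre, him]
    have hc : Real.cos (2 * x) = 1 - 2 * Real.sin x ^ 2 := by
      rw [Real.cos_two_mul, Real.cos_sq']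
      ring
    rw [hc, Real.sin_two_mul]
    nlinarith [Real.sin_sq_add_cos_sq x]
  have h2 : 0 ≤ ‖1 - Complex.exp (2 * x * Complex.I)‖ := norm_nonneg _
  nlinarith [hsq, h2, hsin]

set_option maxHeartbeats 1000000 in
open Finset Polynomial in
lemma prod_two_sin_eq (N : ℕ) (hN : 2 ≤ N) :
    ∏ m ∈ (Finset.range N).filter (fun m => m.Coprime N),
        (2 * Real.sin (m * Real.pi / N)) =
      (Polynomial.cyclotomic N ℝ).eval 1 := by
  have hN0 : (0:ℕ) < N := by omega
  have hNne : N ≠ 0 := by omega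
  set ζ := Complex.exp (2 * Real.pi * Complex.I / N) with hζdef
  have hζ : IsPrimitiveRoot ζ N := Complex.isPrimitiveRoot_exp N hNne
  have : NeZero N := ⟨hNne⟩
  -- primitive roots as image
  have himg : primitiveRoots N ℂ =
      Finset.image (fun m => ζ ^ m) ((Finset.range N).filter (fun m => m.Coprime N)) := by
    ext μ
    simp only [mem_primitiveRoots hN0, Finset.mem_image, Finset.mem_filter, Finset.mem_range]
    rw [hζ.isPrimitiveRoot_iff]
    constructor
    · rintro ⟨i, hi, hc, rfl⟩; exact ⟨i, ⟨hi, hc⟩, rfl⟩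
    · rintro ⟨i, ⟨hi, hc⟩, rfl⟩; exact ⟨i, hi, hc, rfl⟩
  have hinj : ∀ a ∈ (Finset.range N).filter (fun m => m.Coprime N),
      ∀ b ∈ (Finset.range N).filter (fun m => m.Coprime N),
      ζ ^ a = ζ ^ b → a = b := by
    intro a ha b hb h
    simp only [Finset.mem_filter, Finset.mem_range] at ha hb
    exact hζ.pow_inj ha.1 hb.1 h
  -- eval of ℂ cyclotomic at 1
  have heval : (Polynomial.cyclotomic N ℂ).eval 1 =
      ∏ m ∈ (Finset.range N).filter (fun m => m.Coprime N), (1 - ζ ^ m) := by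
    rw [cyclotomic_eq_prod_X_sub_primitiveRoots hζ, Polynomial.eval_prod, himg,
      Finset.prod_image hinj]
    simp
  -- relation between ℝ and ℂ evals
  have hmap : (Polynomial.cyclotomic N ℂ).eval 1 =
      (((Polynomial.cyclotomic N ℝ).eval 1 : ℝ) : ℂ) := by
    have := Polynomial.cyclotomic.eval_apply (1 : ℝ) N (algebraMap ℝ ℂ)
    simpa using this
  have hnonneg : (0:ℝ) ≤ (Polynomial.cyclotomic N ℝ).eval 1 :=
    Polynomial.cyclotomic_nonneg N le_rfl
  -- each abs
  have habs : ∀ m ∈ (Finset.range N).filter (fun m => m.Coprime N),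
      ‖1 - ζ ^ m‖ = 2 * Real.sin (m * Real.pi / N) := by
    intro m hm
    simp only [Finset.mem_filter, Finset.mem_range] at hm
    have hm1 : 1 ≤ m := by
      rcases Nat.eq_zero_or_pos m with rfl | h
      · exfalso
        have := hm.2
        simp [Nat.coprime_zero_left] at this
        omega
      · exact h
    have hζm : ζ ^ m = Complex.exp (2 * ((m * Real.pi / N : ℝ) : ℂ) * Complex.I) := by
      rw [hζdef, ← Complex.exp_nat_mul]
      congr 1
      push_cast
      field_simp
    rw [hζm]
    exact abs_one_sub_exp (m * Real.pi / N) (by positivity) (by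
      rw [div_le_iff₀ (by positivity)]
      have : (m:ℝ) ≤ N := by exact_mod_cast (le_of_lt hm.1)
      nlinarith [Real.pi_pos, hm.1, (show (m:ℝ) < N by exact_mod_cast hm.1)])
  calc ∏ m ∈ (Finset.range N).filter (fun m => m.Coprime N),
        (2 * Real.sin (m * Real.pi / N))
      = ∏ m ∈ (Finset.range N).filter (fun m => m.Coprime N), ‖1 - ζ ^ m‖ := by
        exact (Finset.prod_congr rfl habs).symm
    _ = ‖(Polynomial.cyclotomic N ℂ).eval 1‖ := by
        rw [heval, norm_prod]
    _ = (Polynomial.cyclotomic N ℝ).eval 1 := by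
        rw [hmap, Complex.norm_real, Real.norm_eq_abs, abs_of_nonneg hnonneg]

noncomputable def Sreg (n : ℕ) : Finset ℕ :=
  (Finset.Icc 1 (n - 1)).filter fun k => IsRegularMod k n

def Dset (n : ℕ) : Finset ℕ := n.divisors.filter fun N => N ≠ 1 ∧ Nat.Coprime N (n / N)

def Tset (N : ℕ) : Finset ℕ := (Finset.Icc 1 N).filter fun m => m.Coprime N

section Bij
variable {n : ℕ} (hn : 2 ≤ n)

lemma mem_forward (hn : 2 ≤ n) {k : ℕ} (hk : k ∈ Sreg n) :
    (⟨n / Nat.gcd k n, k / Nat.gcd k n⟩ : Σ _ : ℕ, ℕ) ∈ (Dset n).sigma (fun N => Tset N) := by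
  simp only [Sreg, Finset.mem_filter, Finset.mem_Icc] at hk
  obtain ⟨⟨hk1, hk2⟩, hreg⟩ := hk
  have hn0 : n ≠ 0 := by omega
  have hkn : k < n := by omega
  set d := Nat.gcd k n with hd
  have hdk : d ∣ k := Nat.gcd_dvd_left k n
  have hdn : d ∣ n := Nat.gcd_dvd_right k n
  have hdpos : 0 < d := Nat.gcd_pos_of_pos_right _ (by omega)
  have hcop : Nat.Coprime d (n / d) := (isRegularMod_iff (by omega) k).mp hreg
  have hNn : n / d ∣ n := Nat.div_dvd_of_dvd hdn
  have hN1 : n / d ≠ 1 := by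
    intro h
    have : n = d := by
      have := Nat.div_mul_cancel hdn
      rw [h, one_mul] at this
      omega
    have : n ∣ k := this ▸ hdk
    have := Nat.le_of_dvd (by omega) this
    omega
  simp only [Finset.mem_sigma, Dset, Tset, Finset.mem_filter, Nat.mem_divisors, Finset.mem_Icc]
  refine ⟨⟨⟨hNn, hn0⟩, hN1, ?_⟩, ⟨?_, ?_⟩, ?_⟩
  · rw [Nat.div_div_self hdn hn0]
    exact hcop.symm
  · exact Nat.div_pos (Nat.le_of_dvd (by omega) hdk) hdpos
  · exact Nat.div_le_div_right (by omega)
  · exact Nat.coprime_div_gcd_div_gcd hdpos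

lemma mem_backward (hn : 2 ≤ n) {x : Σ _ : ℕ, ℕ} (hx : x ∈ (Dset n).sigma (fun N => Tset N)) :
    (n / x.1) * x.2 ∈ Sreg n := by
  obtain ⟨N, m⟩ := x
  simp only [Finset.mem_sigma, Dset, Tset, Finset.mem_filter, Nat.mem_divisors,
    Finset.mem_Icc] at hx
  obtain ⟨⟨⟨hNn, hn0⟩, hN1, hcop⟩, ⟨hm1, hmN⟩, hmcop⟩ := hx
  have hNpos : 0 < N := Nat.pos_of_dvd_of_pos hNn (by omega)
  set d := n / N with hd
  have hdN : d * N = n := Nat.div_mul_cancel hNn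
  have hdpos : 0 < d := Nat.div_pos (Nat.le_of_dvd (by omega) hNn) hNpos
  have hmltN : m < N := by
    rcases Nat.lt_or_ge m N with h | h
    · exact h
    · exfalso
      have : m = N := by omega
      subst this
      exact hN1 (by simpa [Nat.Coprime, Nat.gcd_self] using hmcop)
  have hgcd : Nat.gcd (d * m) n = d := by
    conv_lhs => rw [← hdN]
    rw [Nat.gcd_mul_left]
    rw [Nat.Coprime] at hmcop
    rw [hmcop, mul_one]
  simp only [Sreg, Finset.mem_filter, Finset.mem_Icc]
  have hub : d * m ≤ n - 1 := by
    have h1 : d * m ≤ d * (N - 1) := Nat.mul_le_mul_left d (by omega)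
    have h2 : d * (N - 1) + d = d * N := by
      have hN' : N - 1 + 1 = N := by omega
      calc d * (N - 1) + d = d * ((N - 1) + 1) := by ring
        _ = d * N := by rw [hN']
    omega
  refine ⟨⟨Nat.mul_pos hdpos (by omega), hub⟩, ?_⟩
  rw [isRegularMod_iff (by omega), hgcd]
  have : n / d = N := Nat.div_div_self hNn hn0
  rw [this]
  exact hcop.symm

lemma left_inv (hn : 2 ≤ n) {k : ℕ} (hk : k ∈ Sreg n) :
    (n / (n / Nat.gcd k n)) * (k / Nat.gcd k n) = k := by
  have hn0 : n ≠ 0 := by omega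
  have hdk : Nat.gcd k n ∣ k := Nat.gcd_dvd_left k n
  have hdn : Nat.gcd k n ∣ n := Nat.gcd_dvd_right k n
  rw [Nat.div_div_self hdn hn0]
  exact Nat.mul_div_cancel' hdk

lemma right_inv (hn : 2 ≤ n) {x : Σ _ : ℕ, ℕ} (hx : x ∈ (Dset n).sigma (fun N => Tset N)) :
    (⟨n / Nat.gcd ((n / x.1) * x.2) n, ((n / x.1) * x.2) / Nat.gcd ((n / x.1) * x.2) n⟩
      : Σ _ : ℕ, ℕ) = x := by
  obtain ⟨N, m⟩ := x
  simp only [Finset.mem_sigma, Dset, Tset, Finset.mem_filter, Nat.mem_divisors,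
    Finset.mem_Icc] at hx
  obtain ⟨⟨⟨hNn, hn0⟩, hN1, hcop⟩, ⟨hm1, hmN⟩, hmcop⟩ := hx
  have hNpos : 0 < N := Nat.pos_of_dvd_of_pos hNn (by omega)
  set d := n / N with hd
  have hdN : d * N = n := Nat.div_mul_cancel hNn
  have hdpos : 0 < d := Nat.div_pos (Nat.le_of_dvd (by omega) hNn) hNpos
  have hgcd : Nat.gcd (d * m) n = d := by
    conv_lhs => rw [← hdN]
    rw [Nat.gcd_mul_left]
    rw [Nat.Coprime] at hmcop
    rw [hmcop, mul_one]
  have h1 : n / Nat.gcd (d * m) n = N := by rw [hgcd]; exact Nat.div_div_self hNn hn0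
  have h2 : (d * m) / Nat.gcd (d * m) n = m := by rw [hgcd]; exact Nat.mul_div_cancel_left m hdpos
  simp only [h1, h2]

lemma prod_Sreg {M : Type*} [CommMonoid M] (hn : 2 ≤ n) (f : ℕ → M) :
    ∏ k ∈ Sreg n, f k = ∏ x ∈ (Dset n).sigma (fun N => Tset N), f ((n / x.1) * x.2) :=
  Finset.prod_nbij' (fun k => ⟨n / Nat.gcd k n, k / Nat.gcd k n⟩)
    (fun x => (n / x.1) * x.2)
    (fun k hk => mem_forward hn hk) (fun x hx => mem_backward hn hx)
    (fun k hk => left_inv hn hk) (fun x hx => right_inv hn hx)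
    (fun k hk => by rw [show (n / (n / Nat.gcd k n)) * (k / Nat.gcd k n) = k from left_inv hn hk])

lemma card_Sreg (hn : 2 ≤ n) :
    (Sreg n).card = ((Dset n).sigma (fun N => Tset N)).card :=
  Finset.card_nbij' (fun k => ⟨n / Nat.gcd k n, k / Nat.gcd k n⟩)
    (fun x => (n / x.1) * x.2)
    (fun k hk => mem_forward hn hk) (fun x hx => mem_backward hn hx)
    (fun k hk => left_inv hn hk) (fun x hx => right_inv hn hx)

end Bij

open Polynomial in
lemma prod_eval_one (n : ℕ) (hn : 2 ≤ n) :
    ∏ N ∈ Dset n, (Polynomial.cyclotomic N ℝ).eval 1 = (kappa n : ℝ) := by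
  have hn0 : n ≠ 0 := by omega
  rw [← Finset.prod_filter_mul_prod_filter_not (Dset n) IsPrimePow]
  have h2 : ∏ N ∈ (Dset n).filter (fun N => ¬ IsPrimePow N),
      (Polynomial.cyclotomic N ℝ).eval 1 = 1 := by
    refine Finset.prod_eq_one fun N hN => ?_
    simp only [Finset.mem_filter, Dset, Nat.mem_divisors] at hN
    obtain ⟨⟨⟨hNn, _⟩, hN1, _⟩, hnpp⟩ := hN
    refine Polynomial.eval_one_cyclotomic_not_prime_pow ?_
    intro p hp k hpk
    rcases Nat.eq_zero_or_pos k with rfl | hk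
    · exact hN1 (by simpa using hpk.symm)
    · exact hnpp ⟨p, k, hp.prime, hk, hpk⟩
  rw [h2, mul_one, kappa, Nat.cast_prod]
  -- key: for unitary prime power divisors, exponent is the full p-adic valuation
  have key : ∀ N ∈ (Dset n).filter IsPrimePow,
      N.minFac ^ n.factorization N.minFac = N := by
    intro N hN
    simp only [Finset.mem_filter, Dset, Nat.mem_divisors] at hN
    obtain ⟨⟨⟨hNn, _⟩, hN1, hcop⟩, p, k, hp, hk, rfl⟩ := hN
    have hp' : p.Prime := hp.nat_prime
    have hmf : (p ^ k).minFac = p := hp'.pow_minFac (by omega)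
    rw [hmf]
    have hkle : k ≤ n.factorization p :=
      (Nat.Prime.pow_dvd_iff_le_factorization hp' hn0).mp hNn
    rcases Nat.eq_or_lt_of_le hkle with h | h
    · rw [← h]
    · exfalso
      have hdvd : p ∣ n / p ^ k := by
        rw [Nat.dvd_div_iff_mul_dvd hNn]
        have : p ^ (k + 1) ∣ n :=
          (Nat.Prime.pow_dvd_iff_le_factorization hp' hn0).mpr (by omega)
        rwa [pow_succ] at this
      have hpN : p ∣ p ^ k := dvd_pow_self p (by omega)
      have : p ∣ Nat.gcd (p ^ k) (n / p ^ k) := Nat.dvd_gcd hpN hdvd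
      rw [Nat.Coprime] at hcop
      rw [hcop] at this
      have := Nat.le_of_dvd one_pos this
      have := hp'.two_le
      omega
  refine Finset.prod_nbij' (fun N => N.minFac) (fun p => p ^ n.factorization p)
    ?_ ?_ ?_ ?_ ?_
  · intro N hN
    have hkey := key N hN
    simp only [Finset.mem_filter, Dset, Nat.mem_divisors] at hN
    obtain ⟨⟨⟨hNn, _⟩, hN1, hcop⟩, p, k, hp, hk, rfl⟩ := hN
    have hp' : p.Prime := hp.nat_prime
    have hmf : (p ^ k).minFac = p := hp'.pow_minFac (by omega)
    show (p ^ k).minFac ∈ n.primeFactors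
    rw [hmf]
    exact Nat.mem_primeFactors.mpr ⟨hp', (dvd_pow_self p (by omega)).trans hNn, hn0⟩
  · intro p hp
    obtain ⟨hp', hpn, _⟩ := Nat.mem_primeFactors.mp hp
    have he : 0 < n.factorization p := hp'.factorization_pos_of_dvd hn0 hpn
    simp only [Finset.mem_filter, Dset, Nat.mem_divisors]
    refine ⟨⟨⟨Nat.ordProj_dvd n p, hn0⟩, ?_, ?_⟩, ?_⟩
    · intro h
      have := hp'.two_le
      have : p ^ n.factorization p ≥ p ^ 1 := Nat.pow_le_pow_right (by omega) he
      simp at this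
      omega
    · exact (Nat.coprime_ordCompl hp' hn0).pow_left _
    · exact ⟨p, n.factorization p, hp'.prime, he, rfl⟩
  · intro N hN
    exact key N hN
  · intro p hp
    obtain ⟨hp', hpn, _⟩ := Nat.mem_primeFactors.mp hp
    have he : 0 < n.factorization p := hp'.factorization_pos_of_dvd hn0 hpn
    exact hp'.pow_minFac (by omega)
  · intro N hN
    have hkey := key N hN
    simp only [Finset.mem_filter, Dset, Nat.mem_divisors] at hN
    obtain ⟨⟨⟨hNn, _⟩, hN1, hcop⟩, p, k, hp, hk, rfl⟩ := hN
    have hp' : p.Prime := hp.nat_prime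
    have hmf : (p ^ k).minFac = p := hp'.pow_minFac (by omega)
    show Polynomial.eval 1 (Polynomial.cyclotomic (p ^ k) ℝ) = ((p ^ k).minFac : ℝ)
    rw [hmf]
    haveI : Fact p.Prime := ⟨hp'⟩
    have hk' : k - 1 + 1 = k := by omega
    rw [← hk', Polynomial.eval_one_cyclotomic_prime_pow]

theorem prod_sin_reg_aux (n : ℕ) (hn : 2 ≤ n) :
    ∏ k ∈ Sreg n, Real.sin (k * Real.pi / n) =
      (kappa n : ℝ) / 2 ^ (Sreg n).card := by
  have hn0 : n ≠ 0 := by omega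
  have hnR : (n : ℝ) ≠ 0 := by positivity
  rw [prod_Sreg hn (fun k => Real.sin (k * Real.pi / n))]
  rw [Finset.prod_sigma]
  have hinner : ∀ N ∈ Dset n,
      ∏ m ∈ Tset N, Real.sin ((((n / N) * m : ℕ) : ℝ) * Real.pi / n)
        = (Polynomial.cyclotomic N ℝ).eval 1 / 2 ^ (Tset N).card := by
    intro N hN
    simp only [Dset, Finset.mem_filter, Nat.mem_divisors] at hN
    obtain ⟨⟨hNn, _⟩, hN1, hcop⟩ := hN
    have hNpos : 0 < N := Nat.pos_of_dvd_of_pos hNn (by omega)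
    have hN2 : 2 ≤ N := by omega
    have hNR : (N : ℝ) ≠ 0 := by positivity
    have hdN : (n / N) * N = n := Nat.div_mul_cancel hNn
    have hterm : ∀ m : ℕ, (((n / N) * m : ℕ) : ℝ) * Real.pi / n = m * Real.pi / N := by
      intro m
      have hdpos : 0 < n / N := Nat.div_pos (Nat.le_of_dvd (by omega) hNn) hNpos
      have hcast : ((n / N : ℕ) : ℝ) * N = n := by exact_mod_cast hdN
      rw [← hcast]
      push_cast
      have : ((n / N : ℕ) : ℝ) ≠ 0 := by positivity
      field_simp
    rw [Finset.prod_congr rfl (fun m _ => by rw [hterm m])]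
    have hT : Tset N = (Finset.range N).filter (fun m => m.Coprime N) := by
      ext m
      simp only [Tset, Finset.mem_filter, Finset.mem_Icc, Finset.mem_range]
      constructor
      · rintro ⟨⟨h1, h2⟩, hc⟩
        refine ⟨?_, hc⟩
        rcases Nat.eq_or_lt_of_le h2 with rfl | h
        · exact absurd (by simpa [Nat.Coprime, Nat.gcd_self] using hc) (by omega)
        · exact h
      · rintro ⟨h1, hc⟩
        refine ⟨⟨?_, by omega⟩, hc⟩
        rcases Nat.eq_zero_or_pos m with rfl | h
        · exfalso
          have : N = 1 := by simpa [Nat.coprime_zero_left] using hc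
          omega
        · exact h
    rw [hT]
    have h2s := prod_two_sin_eq N hN2
    rw [Finset.prod_mul_distrib, Finset.prod_const] at h2s
    rw [eq_div_iff (by positivity)]
    rw [← h2s]
    ring
  rw [Finset.prod_congr rfl hinner, Finset.prod_div_distrib, prod_eval_one n hn,
    Finset.prod_pow_eq_pow_sum]
  congr 1
  rw [← Finset.card_sigma, ← card_Sreg hn]

theorem prod_sin_reg (n : ℕ) (hn : 2 ≤ n) :
    ∏ k ∈ (Finset.Icc 1 (n - 1)).filter (fun k => IsRegularMod k n),
        Real.sin (k * Real.pi / n) =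
      (kappa n : ℝ) / 2 ^ ((Reg n).card - 1) := by
  have hSeq : (Finset.Icc 1 (n - 1)).filter (fun k => IsRegularMod k n) = Sreg n := by
    simp [Sreg]
  have hnotmem : n ∉ Sreg n := by
    simp only [Sreg, Finset.mem_filter, Finset.mem_Icc]
    rintro ⟨⟨-, h⟩, -⟩
    omega
  have hReg : Reg n = insert n (Sreg n) := by
    ext k
    simp only [Reg, Sreg, Finset.mem_insert, Finset.mem_filter, Finset.mem_Icc]
    constructor
    · rintro ⟨⟨h1, h2⟩, hreg⟩
      rcases eq_or_ne k n with rfl | h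
      · exact Or.inl rfl
      · exact Or.inr ⟨⟨h1, by omega⟩, hreg⟩
    · rintro (rfl | ⟨⟨h1, h2⟩, hreg⟩)
      · exact ⟨⟨by omega, le_rfl⟩, n_regular _⟩
      · exact ⟨⟨h1, by omega⟩, hreg⟩
  have hcard : (Reg n).card - 1 = (Sreg n).card := by
    rw [hReg, Finset.card_insert_of_notMem hnotmem]
    omega
  rw [hSeq, hcard]
  exact prod_sin_reg_aux n hn
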